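/- The number of orbits of the natural rotation action of the cyclic group C_n on the set of binary strings of length n equals (1/n) * ∑_{d | n} φ(d) * 2^(n/d), where φ is Euler's totient function. -/

import Mathlib

open MulAction Finset

instance necklaceMulAction (n : ℕ) : MulAction (Multiplicative (ZMod n)) (ZMod n → Bool) where
  smul k f := fun i => f (i - k.toAdd)
  one_smul f := funext fun i => by
    show f (i - (1 : Multiplicative (ZMod n)).toAdd) = f i
    simp
  mul_smul k l f := funext fun i => by
    show f (i - (k * l).toAdd) = f (i - k.toAdd - l.toAdd)
    rw [toAdd_mul]; ring_nf

lemma necklace_smul_apply {n : ℕ} (k : Multiplicative (ZMod n)) (f : ZMod n → Bool) (i : ZMod n) :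
    (k • f) i = f (i - k.toAdd) := rfl

lemma necklace_periodic {n : ℕ} {a : ZMod n} {f : ZMod n → Bool}
    (hf : ∀ i, f (i - a) = f i) (m : ℤ) (i : ZMod n) : f (i + m • a) = f i := by
  induction m using Int.induction_on with
  | zero => simp
  | succ m ih =>
      have h1 : i + ((m : ℤ) + 1) • a - a = i + (m : ℤ) • a := by
        rw [add_smul, one_zsmul]; ring
      rw [← hf (i + ((m : ℤ) + 1) • a), h1]
      exact ih
  | pred m ih =>
      have h1 : i + (-(m : ℤ) - 1) • a = (i + (-(m : ℤ)) • a) - a := by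
        rw [sub_smul, one_zsmul]; ring
      rw [h1, hf]
      exact ih

lemma necklace_card_fixedBy (n : ℕ) [NeZero n] (k : Multiplicative (ZMod n)) :
    Nat.card (fixedBy (ZMod n → Bool) k) = 2 ^ (n.gcd k.toAdd.val) := by
  set a : ZMod n := k.toAdd with ha
  set H := AddSubgroup.zmultiples a with hH
  -- the bijection with functions on the quotient
  have hbij : Function.Bijective
      (fun F : (ZMod n ⧸ H) → Bool => (⟨fun i => F (QuotientAddGroup.mk i), by
        rw [mem_fixedBy]
        funext i
        rw [necklace_smul_apply]
        congr 1
        rw [QuotientAddGroup.eq]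
        refine AddSubgroup.mem_zmultiples_iff.mpr ⟨1, ?_⟩
        simp [ha]⟩ : fixedBy (ZMod n → Bool) k)) := by
    constructor
    · intro F F' hFF'
      have := congrArg Subtype.val hFF'
      funext q
      induction q using QuotientAddGroup.induction_on with
      | H i => exact congrFun this i
    · rintro ⟨f, hf⟩
      have hper : ∀ i, f (i - a) = f i := fun i => congrFun hf i
      refine ⟨fun q => f q.out, ?_⟩
      ext i
      simp only
      have h1 : QuotientAddGroup.mk (s := H) (QuotientAddGroup.mk (s := H) i).out
          = QuotientAddGroup.mk i := QuotientAddGroup.out_eq' _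
      rw [QuotientAddGroup.eq] at h1
      obtain ⟨m, hm⟩ := AddSubgroup.mem_zmultiples_iff.mp h1
      have : i = (QuotientAddGroup.mk (s := H) i).out + m • a := by
        rw [hm]; abel
      conv_rhs => rw [this, necklace_periodic hper]
  have hcard : Nat.card (ZMod n ⧸ H) = n.gcd a.val := by
    have h1 : Nat.card (ZMod n) = Nat.card (ZMod n ⧸ H) * Nat.card H :=
      AddSubgroup.card_eq_card_quotient_mul_card_addSubgroup H
    have h2 : Nat.card H = addOrderOf a := Nat.card_zmultiples a
    have h3 : addOrderOf a = n / n.gcd a.val := by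
      conv_lhs => rw [← ZMod.natCast_rightInverse (n := n) a]
      exact ZMod.addOrderOf_coe a.val (NeZero.ne n)
    have hg : n.gcd a.val ∣ n := Nat.gcd_dvd_left _ _
    have hgpos : 0 < n.gcd a.val := Nat.gcd_pos_of_pos_left _ (Nat.pos_of_ne_zero (NeZero.ne n))
    have hdpos : 0 < n / n.gcd a.val := Nat.div_pos (Nat.le_of_dvd (Nat.pos_of_ne_zero (NeZero.ne n)) hg) hgpos
    rw [Nat.card_zmod, h2, h3] at h1
    have : n.gcd a.val * (n / n.gcd a.val) = n := Nat.mul_div_cancel' hg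
    apply Nat.eq_of_mul_eq_mul_right hdpos
    rw [← h1, this]
  rw [← Nat.card_eq_of_bijective _ hbij, Nat.card_fun, hcard, Nat.card_eq_fintype_card,
    Fintype.card_bool]

/-- The number of orbits of the rotation action of `C_n = ZMod n` on binary strings
of length `n` (functions `ZMod n → Bool`, with `(k • f) i = f (i - k)`) equals
`(1/n) * ∑_{d ∣ n} φ(d) * 2^(n/d)`, stated multiplied through by `n`. -/
theorem necklace_count (n : ℕ) (hn : 1 ≤ n) :
    Nat.card (Quot (fun f g : ZMod n → Bool => ∃ k : ZMod n, ∀ i, g i = f (i - k))) * n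
      = ∑ d ∈ n.divisors, Nat.totient d * 2 ^ (n / d) := by
  haveI : NeZero n := ⟨by omega⟩
  classical
  let G := Multiplicative (ZMod n)
  let β := (ZMod n → Bool)
  -- relations agree
  have hrel : ∀ f g : β, (∃ k : ZMod n, ∀ i, g i = f (i - k)) ↔ (orbitRel G β).r f g := by
    intro f g
    constructor
    · rintro ⟨k, hk⟩
      refine ⟨Multiplicative.ofAdd (-k), funext fun i => ?_⟩
      show ((Multiplicative.ofAdd (-k) : G) • g) i = f i
      rw [necklace_smul_apply]
      show g (i - (-k)) = f i
      rw [sub_neg_eq_add, hk, add_sub_cancel_right]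
    · rintro ⟨m, hm⟩
      have hm' : m • g = f := hm
      refine ⟨-m.toAdd, fun i => ?_⟩
      rw [← hm', necklace_smul_apply, sub_neg_eq_add, add_sub_cancel_right]
  have e1 : (Quot (fun f g : β => ∃ k : ZMod n, ∀ i, g i = f (i - k)))
      ≃ Quotient (orbitRel G β) := Quot.congrRight hrel
  letI : ∀ a : G, Fintype (fixedBy β a) := fun a => Fintype.ofFinite _
  letI : Fintype (Quotient (orbitRel G β)) := Fintype.ofFinite _
  have burn := MulAction.sum_card_fixedBy_eq_card_orbits_mul_card_group G β
  have hcardG : Fintype.card G = n := by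
    rw [Fintype.card_multiplicative]
    exact ZMod.card n
  calc Nat.card (Quot (fun f g : β => ∃ k : ZMod n, ∀ i, g i = f (i - k))) * n
      = Fintype.card (Quotient (orbitRel G β)) * Fintype.card G := by
        rw [Nat.card_congr e1, Nat.card_eq_fintype_card, hcardG]
    _ = ∑ k : G, Fintype.card (fixedBy β k) := burn.symm
    _ = ∑ k : G, 2 ^ (n.gcd k.toAdd.val) := by
        refine Finset.sum_congr rfl fun k _ => ?_
        rw [← Nat.card_eq_fintype_card, necklace_card_fixedBy]
    _ = ∑ j : ZMod n, 2 ^ (n.gcd j.val) :=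
        Fintype.sum_equiv Multiplicative.toAdd _ _ (fun k => rfl)
    _ = ∑ k ∈ Finset.range n, 2 ^ (n.gcd k) := by
        refine Finset.sum_nbij' (fun j => j.val) (fun k => (k : ZMod n)) ?_ ?_ ?_ ?_ ?_
        · intro a _; exact Finset.mem_range.mpr (ZMod.val_lt a)
        · intro k _; exact Finset.mem_univ _
        · intro a _; exact ZMod.natCast_rightInverse a
        · intro k hk; exact ZMod.val_natCast_of_lt (Finset.mem_range.mp hk)
        · intro a _; rfl
    _ = ∑ d ∈ n.divisors, Nat.totient (n / d) * 2 ^ d := by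
        rw [← Finset.sum_fiberwise_of_maps_to (g := fun k => n.gcd k)
          (fun k _ => Nat.mem_divisors.mpr ⟨Nat.gcd_dvd_left _ _, NeZero.ne n⟩)]
        refine Finset.sum_congr rfl fun d hd => ?_
        rw [Nat.totient_div_of_dvd (Nat.dvd_of_mem_divisors hd), ← Finset.sum_const_nat]
        intro k hk
        rw [(Finset.mem_filter.mp hk).2]
    _ = ∑ d ∈ n.divisors, Nat.totient d * 2 ^ (n / d) := by
        rw [← Nat.sum_div_divisors n (fun d => Nat.totient d * 2 ^ (n / d))]
        refine Finset.sum_congr rfl fun d hd => ?_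
        rw [Nat.div_div_self (Nat.dvd_of_mem_divisors hd) (NeZero.ne n)]
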